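/- Let F : A → B and G : B → C be functors between groupoids such that H = G ∘ F is an isofibration. Then F is essentially surjective if and only if for every object c of C, the induced functor between the strict fibers H⁻¹(c) → G⁻¹(c) (i.e. the pullbacks of A and B along the functor 1 → C picking out c) is essentially surjective. -/

import Mathlib

open CategoryTheory

/-- A functor between groupoids is an isofibration if every (iso)morphism out of an
object in the image lifts. -/
def Isofib {B C : Type*} [Groupoid B] [Groupoid C] (G : B ⥤ C) : Prop :=
  ∀ (b : B) (c : C) (γ : G.obj b ⟶ c),
    ∃ (b' : B) (β : b ⟶ b') (e : G.obj b' = c), G.map β = γ ≫ eqToHom e.symm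

/-- The strict fiber of a functor `K : D ⥤ C` over an object `c : C`. -/
structure StrictFiber {D C : Type*} [Category D] [Category C] (K : D ⥤ C) (c : C) where
  d : D
  w : K.obj d = c

instance StrictFiber.category {D C : Type*} [Category D] [Category C] (K : D ⥤ C) (c : C) :
    Category (StrictFiber K c) where
  Hom x y := {f : x.d ⟶ y.d // K.map f = eqToHom (x.w.trans y.w.symm)}
  id x := ⟨𝟙 _, by simp⟩
  comp f g := ⟨f.1 ≫ g.1, by rw [K.map_comp, f.2, g.2]; simp⟩
  id_comp := by intros; apply Subtype.ext; dsimp; simp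
  comp_id := by intros; apply Subtype.ext; dsimp; simp
  assoc := by intros; apply Subtype.ext; dsimp; simp

/-- The functor induced by `F` between the strict fibers of `F ⋙ G` and `G` over `c`. -/
def fiberMap {A B C : Type*} [Category A] [Category B] [Category C]
    (F : A ⥤ B) (G : B ⥤ C) (c : C) : StrictFiber (F ⋙ G) c ⥤ StrictFiber G c where
  obj x := ⟨F.obj x.d, x.w⟩
  map f := ⟨F.map f.1, f.2⟩
  map_id := by intros; apply Subtype.ext; exact F.map_id _
  map_comp := by intros; apply Subtype.ext; exact F.map_comp _ _


instance StrictFiber.groupoid {D C : Type*} [Groupoid D] [Category C] (K : D ⥤ C) (c : C) :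
    Groupoid (StrictFiber K c) where
  inv := fun {x y} f => ⟨Groupoid.inv f.1, by
    have h : K.map f.1 ≫ K.map (Groupoid.inv f.1) = 𝟙 _ := by
      rw [← K.map_comp, Groupoid.comp_inv, K.map_id]
    rw [f.2] at h
    calc K.map (Groupoid.inv f.1)
        = eqToHom (y.w.trans x.w.symm) ≫
            (eqToHom (x.w.trans y.w.symm) ≫ K.map (Groupoid.inv f.1)) := by simp
      _ = eqToHom (y.w.trans x.w.symm) := by rw [h, Category.comp_id]⟩
  inv_comp f := by
    apply Subtype.ext
    show Groupoid.inv f.1 ≫ f.1 = 𝟙 _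
    simp
  comp_inv f := by
    apply Subtype.ext
    show f.1 ≫ Groupoid.inv f.1 = 𝟙 _
    simp

theorem essSurj_iff_essSurj_on_fibers {A B C : Type*} [Groupoid A] [Groupoid B] [Groupoid C]
    (F : A ⥤ B) (G : B ⥤ C) (hIso : Isofib (F ⋙ G)) :
    F.EssSurj ↔ ∀ c : C, (fiberMap F G c).EssSurj := by
  constructor
  · intro hF c
    constructor
    intro x
    obtain ⟨a, ⟨e⟩⟩ := Functor.EssSurj.mem_essImage (F := F) x.d
    obtain ⟨a', β, e', hβ⟩ := hIso a c (G.map e.hom ≫ eqToHom x.w)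
    have hβ' : G.map (F.map β) = (G.map e.hom ≫ eqToHom x.w) ≫ eqToHom e'.symm := hβ
    refine ⟨⟨a', e'⟩, ⟨asIso (⟨F.map (Groupoid.inv β) ≫ e.hom, ?_⟩ :
      (fiberMap F G c).obj ⟨a', e'⟩ ⟶ x)⟩⟩
    show G.map (F.map (Groupoid.inv β) ≫ e.hom) = _
    rw [Functor.map_comp]
    rw [show F.map (Groupoid.inv β) = inv (F.map β) by rw [Groupoid.inv_eq_inv, F.map_inv]]
    rw [show G.map (inv (F.map β)) = inv (G.map (F.map β)) from G.map_inv _]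
    simp only [hβ']
    simp
    rfl
  · intro h
    constructor
    intro b
    obtain ⟨y, ⟨e⟩⟩ := Functor.EssSurj.mem_essImage (F := fiberMap F G (G.obj b)) ⟨b, rfl⟩
    refine ⟨y.d, ⟨⟨e.hom.1, e.inv.1, ?_, ?_⟩⟩⟩
    · exact congrArg Subtype.val e.hom_inv_id
    · exact congrArg Subtype.val e.inv_hom_id
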